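/- Exact SIO dilution from a decomposition: let ρ' be a state admitting a finite pure-state decomposition ρ' = Σ_j p_j |ψ_j⟩⟨ψ_j| (p_j > 0) in which every |ψ_j⟩ has at most M nonzero computational-basis coefficients. Then there exists a CPTP map Λ(ω) = Σ_n K_n ω K_n† in which every Kraus operator K_n and every adjoint K_n† is incoherent-preserving (i.e., Λ is a strictly incoherent operation, hence also an incoherent operation), such that Λ(Ψ_M) = ρ'. -/

import Mathlib

open scoped Matrix ComplexOrder

namespace OneShot

variable {ι κ : Type*} [Fintype ι] [DecidableEq ι] [Fintype κ] [DecidableEq κ]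

/-- A quantum state: a positive semidefinite matrix with unit trace. -/
def IsState (ρ : Matrix ι ι ℂ) : Prop := ρ.PosSemidef ∧ ρ.trace = 1

/-- An incoherent state: a state that is diagonal in the computational basis. -/
def IsIncoherent (ρ : Matrix ι ι ℂ) : Prop := IsState ρ ∧ ρ.IsDiag

/-- The completely dephasing channel `Δ`. -/
def dephase (ρ : Matrix ι ι ℂ) : Matrix ι ι ℂ := Matrix.diagonal fun i => ρ i i

/-- The max-relative entropy of coherence
`C_max(ρ) = min_{δ ∈ 𝓘} D_max(ρ‖δ) = log₂ min {λ ≥ 0 | ∃ δ ∈ 𝓘, ρ ≤ λ δ}`. -/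
noncomputable def Cmax (ρ : Matrix ι ι ℂ) : ℝ :=
  Real.logb 2 (sInf {l : ℝ | 0 ≤ l ∧ ∃ δ, IsIncoherent δ ∧ (l • δ - ρ).PosSemidef})

/-- `C_{Δ,max}(ρ) = log₂ min {λ ≥ 0 | ρ ≤ λ Δ(ρ)}`. -/
noncomputable def CDmax (ρ : Matrix ι ι ℂ) : ℝ :=
  Real.logb 2 (sInf {l : ℝ | 0 ≤ l ∧ (l • dephase ρ - ρ).PosSemidef})

/-- Complete positivity of a linear map on matrices. -/
def CompletelyPositive (Λ : Matrix ι ι ℂ →ₗ[ℂ] Matrix κ κ ℂ) : Prop :=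
  ∀ (k : ℕ) (M : Matrix (Fin k × ι) (Fin k × ι) ℂ), M.PosSemidef →
    (Matrix.of fun p q : Fin k × κ =>
      Λ (Matrix.of fun x y => M (p.1, x) (q.1, y)) p.2 q.2).PosSemidef

/-- Trace preservation. -/
def TracePreserving (Λ : Matrix ι ι ℂ →ₗ[ℂ] Matrix κ κ ℂ) : Prop :=
  ∀ A, (Λ A).trace = A.trace

/-- A maximally incoherent operation (MIO): a CPTP map sending every incoherent state
to an incoherent state. -/
def IsMIO (Λ : Matrix ι ι ℂ →ₗ[ℂ] Matrix κ κ ℂ) : Prop :=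
  CompletelyPositive Λ ∧ TracePreserving Λ ∧ ∀ δ, IsIncoherent δ → IsIncoherent (Λ δ)

/-- A dephasing-covariant incoherent operation (DIO): a CPTP map commuting with `Δ`. -/
def IsDIO (Λ : Matrix ι ι ℂ →ₗ[ℂ] Matrix ι ι ℂ) : Prop :=
  CompletelyPositive Λ ∧ TracePreserving Λ ∧ ∀ ρ, Λ (dephase ρ) = dephase (Λ ρ)

/-- An incoherent-preserving (Kraus) operator: `K δ Kᴴ` is a nonnegative multiple of an
incoherent state, for every incoherent state `δ`. -/
def IncoherentPreserving (K : Matrix κ ι ℂ) : Prop :=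
  ∀ δ : Matrix ι ι ℂ, IsIncoherent δ →
    ∃ c : ℝ, 0 ≤ c ∧ ∃ δ' : Matrix κ κ ℂ, IsIncoherent δ' ∧ K * δ * Kᴴ = (c : ℂ) • δ'

/-- An incoherent operation (IO). -/
def IsIO (Λ : Matrix ι ι ℂ →ₗ[ℂ] Matrix κ κ ℂ) : Prop :=
  ∃ (N : ℕ) (K : Fin N → Matrix κ ι ℂ),
    (∀ n, IncoherentPreserving (K n)) ∧ (∑ n, (K n)ᴴ * K n = 1) ∧
    ∀ ρ, Λ ρ = ∑ n, K n * ρ * (K n)ᴴ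

/-- A strictly incoherent operation (SIO). -/
def IsSIO (Λ : Matrix ι ι ℂ →ₗ[ℂ] Matrix κ κ ℂ) : Prop :=
  ∃ (N : ℕ) (K : Fin N → Matrix κ ι ℂ),
    (∀ n, IncoherentPreserving (K n)) ∧ (∀ n, IncoherentPreserving (K n)ᴴ) ∧
    (∑ n, (K n)ᴴ * K n = 1) ∧ ∀ ρ, Λ ρ = ∑ n, K n * ρ * (K n)ᴴ

/-- The outer product `|ψ⟩⟨ψ|`. -/
def outer (ψ : ι → ℂ) : Matrix ι ι ℂ := Matrix.of fun i j => ψ i * star (ψ j)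

/-- `T ψ` is the number of nonzero computational-basis coefficients of `ψ`. -/
noncomputable def T (ψ : ι → ℂ) : ℕ := (Finset.univ.filter fun i => ψ i ≠ 0).card

/-- A finite pure-state decomposition `ρ = Σ_j p_j |ψ_j⟩⟨ψ_j|`. -/
def IsDecomposition (ρ : Matrix ι ι ℂ) (n : ℕ) (p : Fin n → ℝ) (ψ : Fin n → ι → ℂ) : Prop :=
  (∀ j, 0 < p j) ∧ (∑ j, p j = 1) ∧ (∀ j, ∑ i, Complex.normSq (ψ j i) = 1) ∧
    ρ = ∑ j, p j • outer (ψ j)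

/-- `C_0(ρ) = min over decompositions of max_j log₂ T(ψ_j)`. -/
noncomputable def C0 (ρ : Matrix ι ι ℂ) : ℝ :=
  sInf { r | ∃ n p ψ, IsDecomposition ρ n p ψ ∧
    r = Real.logb 2 (↑(Finset.univ.sup fun j => T (ψ j)) : ℝ) }

/-- Matrix square root of a positive semidefinite matrix (junk value `0` elsewhere). -/
noncomputable def msqrt (A : Matrix ι ι ℂ) : Matrix ι ι ℂ :=
  letI := Classical.propDecidable A.PosSemidef
  if h : A.PosSemidef then
    (h.1.eigenvectorUnitary : Matrix ι ι ℂ) *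
      Matrix.diagonal ((↑) ∘ (√·) ∘ h.1.eigenvalues) *
      (star h.1.eigenvectorUnitary : Matrix ι ι ℂ)
  else 0

/-- Uhlmann fidelity `F(ρ,σ) = (Tr √(√ρ σ √ρ))²`. -/
noncomputable def Fid (ρ σ : Matrix ι ι ℂ) : ℝ :=
  ((msqrt (msqrt ρ * σ * msqrt ρ)).trace.re) ^ 2

/-- Smoothed `C_max`. -/
noncomputable def Cmaxeps (ρ : Matrix ι ι ℂ) (ε : ℝ) : ℝ :=
  sInf { r | ∃ ρ', IsState ρ' ∧ 1 - ε ≤ Fid ρ ρ' ∧ r = Cmax ρ' }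

/-- Smoothed `C_{Δ,max}`. -/
noncomputable def CDmaxeps (ρ : Matrix ι ι ℂ) (ε : ℝ) : ℝ :=
  sInf { r | ∃ ρ', IsState ρ' ∧ 1 - ε ≤ Fid ρ ρ' ∧ r = CDmax ρ' }

/-- Smoothed `C_0`. -/
noncomputable def C0eps (ρ : Matrix ι ι ℂ) (ε : ℝ) : ℝ :=
  sInf { r | ∃ ρ', IsState ρ' ∧ 1 - ε ≤ Fid ρ ρ' ∧ r = C0 ρ' }

/-- The maximally coherent state `Ψ_M = |Ψ_M⟩⟨Ψ_M|` of dimension `M`. -/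
noncomputable def PsiM (M : ℕ) : Matrix (Fin M) (Fin M) ℂ := Matrix.of fun _ _ => (1 : ℂ) / M

/-- One-shot coherence cost under MIO. -/
noncomputable def CMIOeps (ρ : Matrix ι ι ℂ) (ε : ℝ) : ℝ :=
  sInf { r | ∃ M : ℕ, 1 ≤ M ∧ r = Real.logb 2 M ∧
    ∃ Λ : Matrix (Fin M) (Fin M) ℂ →ₗ[ℂ] Matrix ι ι ℂ, IsMIO Λ ∧ 1 - ε ≤ Fid ρ (Λ (PsiM M)) }

/-- One-shot coherence cost under DIO. -/
noncomputable def CDIOeps (ρ : Matrix ι ι ℂ) (ε : ℝ) : ℝ :=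
  sInf { r | ∃ M : ℕ, 1 ≤ M ∧ r = Real.logb 2 M ∧
    ∃ Λ : Matrix (Fin M) (Fin M) ℂ →ₗ[ℂ] Matrix ι ι ℂ,
      CompletelyPositive Λ ∧ TracePreserving Λ ∧ (∀ ω, Λ (dephase ω) = dephase (Λ ω)) ∧
      1 - ε ≤ Fid ρ (Λ (PsiM M)) }

/-- One-shot coherence cost under IO. -/
noncomputable def CIOeps (ρ : Matrix ι ι ℂ) (ε : ℝ) : ℝ :=
  sInf { r | ∃ M : ℕ, 1 ≤ M ∧ r = Real.logb 2 M ∧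
    ∃ Λ : Matrix (Fin M) (Fin M) ℂ →ₗ[ℂ] Matrix ι ι ℂ, IsIO Λ ∧ 1 - ε ≤ Fid ρ (Λ (PsiM M)) }

/-- One-shot coherence cost under SIO. -/
noncomputable def CSIOeps (ρ : Matrix ι ι ℂ) (ε : ℝ) : ℝ :=
  sInf { r | ∃ M : ℕ, 1 ≤ M ∧ r = Real.logb 2 M ∧
    ∃ Λ : Matrix (Fin M) (Fin M) ℂ →ₗ[ℂ] Matrix ι ι ℂ, IsSIO Λ ∧ 1 - ε ≤ Fid ρ (Λ (PsiM M)) }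

/-- Matrix logarithm (base 2) via the spectral decomposition, with `log₂ 0 = 0` junk
convention on the kernel, and junk value `0` on non-Hermitian matrices. -/
noncomputable def mlog2 (A : Matrix ι ι ℂ) : Matrix ι ι ℂ :=
  letI := Classical.propDecidable A.IsHermitian
  if h : A.IsHermitian then
    (h.eigenvectorUnitary : Matrix ι ι ℂ) *
      Matrix.diagonal (fun i => (Real.logb 2 (h.eigenvalues i) : ℂ)) *
      (h.eigenvectorUnitary : Matrix ι ι ℂ)ᴴ
  else 0

/-- The relative entropy of coherence `C_r(ρ) = min_{δ ∈ 𝓘} S(ρ‖δ)`, where the minimum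
is (equivalently) restricted to those `δ` whose support contains the support of `ρ`,
on which `S(ρ‖δ) = Tr[ρ (log₂ ρ − log₂ δ)]` is finite. -/
noncomputable def Cr (ρ : Matrix ι ι ℂ) : ℝ :=
  sInf { r | ∃ δ, IsIncoherent δ ∧ (∀ v : ι → ℂ, δ.mulVec v = 0 → ρ.mulVec v = 0) ∧
    r = ((ρ * (mlog2 ρ - mlog2 δ)).trace).re }

/-- Von Neumann entropy (base 2). -/
noncomputable def vN (σ : Matrix ι ι ℂ) : ℝ := -((σ * mlog2 σ).trace.re)

/-- The coherence of formation. -/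
noncomputable def Cf (ρ : Matrix ι ι ℂ) : ℝ :=
  sInf { r | ∃ n p ψ, IsDecomposition ρ n p ψ ∧
    r = ∑ j, p j * vN (dephase (outer (ψ j))) }

/-- The set `A_ρ = { (1/t)[(1+t)Δ(ρ) − ρ] : t > 0, (1+t)Δ(ρ) − ρ ≥ 0 }`. -/
def Aset (ρ : Matrix ι ι ℂ) : Set (Matrix ι ι ℂ) :=
  { σ | ∃ t : ℝ, 0 < t ∧ ((1 + t) • dephase ρ - ρ).PosSemidef ∧
      σ = t⁻¹ • ((1 + t) • dephase ρ - ρ) }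

/-- The `n`-fold tensor power `ρ^{⊗ n}`. -/
def tpow (ρ : Matrix ι ι ℂ) (n : ℕ) : Matrix (Fin n → ι) (Fin n → ι) ℂ :=
  Matrix.of fun i j => ∏ t, ρ (i t) (j t)

lemma psd_diag_nonneg {A : Matrix ι ι ℂ} (h : A.PosSemidef) (i : ι) : 0 ≤ A i i := by
  exact h.diag_nonneg

lemma nonneg_diag_eq_smul_incoherent [Nonempty κ]
    (A : Matrix κ κ ℂ) (hdiag : A.IsDiag) (hpos : ∀ i, 0 ≤ A i i) :
    ∃ c : ℝ, 0 ≤ c ∧ ∃ δ' : Matrix κ κ ℂ, IsIncoherent δ' ∧ A = (c : ℂ) • δ' := by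
  set a : κ → ℝ := fun i => (A i i).re with ha
  have hA : ∀ i, A i i = (a i : ℂ) := fun i => by
    have h := hpos i; rw [Complex.nonneg_iff] at h; exact Complex.ext rfl h.2.symm
  have hanneg : ∀ i, 0 ≤ a i := fun i => ((Complex.nonneg_iff).1 (hpos i)).1
  by_cases h0 : ∑ i, a i = 0
  · have hz : ∀ i ∈ Finset.univ, a i = 0 :=
      (Finset.sum_eq_zero_iff_of_nonneg (fun i _ => hanneg i)).1 h0
    have hA0 : A = 0 := by
      ext i j
      by_cases hij : i = j
      · subst hij; rw [hA i, hz i (Finset.mem_univ i)]; simp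
      · simpa using hdiag hij
    refine ⟨0, le_refl _, Matrix.diagonal (fun _ => ((Fintype.card κ : ℝ)⁻¹ : ℂ)), ⟨⟨?_, ?_⟩, ?_⟩, ?_⟩
    · refine Matrix.PosSemidef.diagonal fun i => ?_
      simp only [Pi.zero_apply]
      rw [← Complex.ofReal_inv, Complex.zero_le_real]
      exact inv_nonneg.2 (Nat.cast_nonneg _)
    · have hc : (Fintype.card κ : ℂ) ≠ 0 := by
        exact_mod_cast Nat.cast_ne_zero.2 Fintype.card_ne_zero
      simp [Matrix.trace_diagonal, Finset.card_univ, hc]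
    · exact Matrix.isDiag_diagonal _
    · simp [hA0]
  · set s := ∑ i, a i with hs
    have hsnn : 0 ≤ s := Finset.sum_nonneg fun i _ => hanneg i
    have hspos : 0 < s := lt_of_le_of_ne hsnn (Ne.symm h0)
    refine ⟨s, hsnn, Matrix.diagonal (fun i => ((a i / s : ℝ) : ℂ)), ⟨⟨?_, ?_⟩, ?_⟩, ?_⟩
    · exact Matrix.PosSemidef.diagonal fun i => by
        simp only [Pi.zero_apply]
        exact Complex.zero_le_real.2 (div_nonneg (hanneg i) hsnn)
    · rw [Matrix.trace_diagonal]
      rw [← Complex.ofReal_sum]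
      rw [← Finset.sum_div]
      rw [← hs, div_self (ne_of_gt hspos)]
      simp
    · exact Matrix.isDiag_diagonal _
    · ext i j
      by_cases hij : i = j
      · subst hij
        rw [hA i]
        simp only [Matrix.smul_apply, Matrix.diagonal_apply_eq, smul_eq_mul]
        rw [← Complex.ofReal_mul]
        congr 1
        field_simp
      · rw [hdiag hij]
        simp [Matrix.diagonal_apply_ne _ hij, hij]

lemma ip_of_mono [Nonempty ι] [Nonempty κ]
    (K : Matrix κ ι ℂ) (g : ι → κ) (hg : Function.Injective g)
    (hK : ∀ r l, r ≠ g l → K r l = 0) : IncoherentPreserving K := by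
  intro δ hδ
  have hδd : Matrix.diagonal δ.diag = δ := hδ.2.diagonal_diag
  have hent : ∀ r r', (K * δ * Kᴴ) r r' = ∑ l, K r l * δ l l * star (K r' l) := by
    intro r r'
    rw [← hδd, Matrix.mul_apply]
    refine Finset.sum_congr rfl fun l _ => ?_
    rw [Matrix.mul_diagonal, Matrix.conjTranspose_apply, Matrix.diagonal_apply_eq]
  refine nonneg_diag_eq_smul_incoherent _ ?_ ?_
  · intro r r' hrr
    rw [hent]
    refine Finset.sum_eq_zero fun l _ => ?_
    by_cases h1 : r = g l
    · have : r' ≠ g l := fun h => hrr (h1.trans h.symm)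
      rw [hK r' l this]; simp
    · rw [hK r l h1]; simp
  · intro r
    rw [hent]
    refine Finset.sum_nonneg fun l _ => ?_
    have h1 : 0 ≤ δ l l := psd_diag_nonneg hδ.1.1 l
    have h2 : (0:ℂ) ≤ K r l * star (K r l) := mul_star_self_nonneg _
    calc (0:ℂ) ≤ (K r l * star (K r l)) * δ l l := mul_nonneg h2 h1
    _ = K r l * δ l l * star (K r l) := by ring

lemma ip_of_mono' [Nonempty ι] [Nonempty κ]
    (K : Matrix κ ι ℂ) (g : ι → κ) (hg : Function.Injective g)
    (hK : ∀ r l, r ≠ g l → K r l = 0) : IncoherentPreserving Kᴴ := by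
  intro δ hδ
  have hδd : Matrix.diagonal δ.diag = δ := hδ.2.diagonal_diag
  have hent : ∀ l l', (Kᴴ * δ * Kᴴᴴ) l l' = ∑ r, star (K r l) * δ r r * K r l' := by
    intro l l'
    rw [Matrix.conjTranspose_conjTranspose, ← hδd, Matrix.mul_apply]
    refine Finset.sum_congr rfl fun r _ => ?_
    rw [Matrix.mul_diagonal, Matrix.conjTranspose_apply, Matrix.diagonal_apply_eq]
  refine nonneg_diag_eq_smul_incoherent _ ?_ ?_
  · intro l l' hll
    rw [hent]
    refine Finset.sum_eq_zero fun r _ => ?_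
    by_cases h1 : r = g l
    · have : r ≠ g l' := fun h => hll (hg (h1.symm.trans h))
      rw [hK r l' this]; simp
    · rw [hK r l h1]; simp
  · intro l
    rw [hent]
    refine Finset.sum_nonneg fun r _ => ?_
    have h1 : 0 ≤ δ r r := psd_diag_nonneg hδ.1.1 r
    have h2 : (0:ℂ) ≤ star (K r l) * K r l := star_mul_self_nonneg _
    calc (0:ℂ) ≤ (star (K r l) * K r l) * δ r r := mul_nonneg h2 h1
    _ = star (K r l) * δ r r * K r l := by ring


/-- exact SIO dilution from a decomposition whose pure states all have at
most `M` nonzero computational-basis coefficients. -/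
theorem SIO_exact_dilution {d M : ℕ} (hM : 1 ≤ M) (hd : M ≤ d)
    (ρ' : Matrix (Fin d) (Fin d) ℂ) (hρ' : IsState ρ')
    (n : ℕ) (p : Fin n → ℝ) (ψ : Fin n → Fin d → ℂ)
    (hdec : IsDecomposition ρ' n p ψ) (hT : ∀ j, T (ψ j) ≤ M) :
    ∃ (N : ℕ) (K : Fin N → Matrix (Fin d) (Fin M) ℂ),
      (∀ m, IncoherentPreserving (K m)) ∧ (∀ m, IncoherentPreserving (K m)ᴴ) ∧
      (∑ m, (K m)ᴴ * K m = 1) ∧ (∑ m, K m * PsiM M * (K m)ᴴ = ρ') := by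
  haveI : NeZero M := ⟨by omega⟩
  haveI hne : Nonempty (Fin M) := ⟨⟨0, by omega⟩⟩
  haveI hned : Nonempty (Fin d) := ⟨⟨0, by omega⟩⟩
  obtain ⟨hp, hpsum, hnorm, hρeq⟩ := hdec
  -- covering injections
  have hcov : ∀ j : Fin n, ∃ g : Fin M → Fin d, Function.Injective g ∧
      ∀ r, ψ j r ≠ 0 → ∃ i, g i = r := by
    intro j
    obtain ⟨t, hsub, -, hcard⟩ := Finset.exists_subsuperset_card_eq
      (Finset.subset_univ (Finset.univ.filter fun i => ψ j i ≠ 0)) (hT j)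
      (by simpa using hd)
    refine ⟨fun i => (t.orderIsoOfFin hcard i : Fin d), ?_, ?_⟩
    · intro a b hab
      exact (t.orderIsoOfFin hcard).injective (Subtype.ext hab)
    · intro r hr
      have hrt : r ∈ t := hsub (Finset.mem_filter.2 ⟨Finset.mem_univ r, hr⟩)
      exact ⟨(t.orderIsoOfFin hcard).symm ⟨r, hrt⟩, by simp⟩
  choose g hginj hgcov using hcov
  set sq : Fin n → ℂ := fun j => ((Real.sqrt (p j) : ℝ) : ℂ) with hsq
  have hsqsq : ∀ j, sq j * sq j = ((p j : ℝ) : ℂ) := by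
    intro j
    rw [hsq, ← Complex.ofReal_mul, Real.mul_self_sqrt (hp j).le]
  have hsqstar : ∀ j, star (sq j) = sq j := fun j => Complex.conj_ofReal _
  obtain ⟨K0, hval⟩ : ∃ K0 : Fin n × Fin M → Matrix (Fin d) (Fin M) ℂ,
      ∀ j m r l, K0 (j, m) r l = if r = g j (l - m) then sq j * ψ j r else 0 :=
    ⟨fun x => Matrix.of fun r l => if r = g x.1 (l - x.2) then sq x.1 * ψ x.1 r else 0,
      fun j m r l => rfl⟩
  have hinj : ∀ (j : Fin n) (m : Fin M), Function.Injective fun l : Fin M => g j (l - m) :=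
    fun j m => (hginj j).comp fun a b h => by
      have : a - m = b - m := h
      exact sub_left_injective this
  have hzero : ∀ j m r l, r ≠ g j (l - m) → K0 (j, m) r l = 0 := by
    intro j m r l h
    rw [hval, if_neg h]
  -- sum of squared coefficients over the covering equals 1
  have hpsi_img : ∀ j, ∑ i : Fin M, Complex.normSq (ψ j (g j i)) = 1 := by
    intro j
    rw [← hnorm j]
    have h1 : ∑ i : Fin M, Complex.normSq (ψ j (g j i))
        = ∑ r ∈ Finset.univ.image (g j), Complex.normSq (ψ j r) :=
      (Finset.sum_image (f := fun r => Complex.normSq (ψ j r)) (g := g j)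
        (fun a _ b _ h => hginj j h)).symm
    rw [h1]
    refine Finset.sum_subset (Finset.subset_univ _) ?_
    intro r _ hr
    have hψ0 : ψ j r = 0 := by
      by_contra h
      obtain ⟨i, hi⟩ := hgcov j r h
      exact hr (Finset.mem_image.2 ⟨i, Finset.mem_univ i, hi⟩)
    simp [hψ0]
  -- row sums
  have hrow : ∀ (j : Fin n) (m : Fin M) (r : Fin d),
      ∑ l, K0 (j, m) r l = sq j * ψ j r := by
    intro j m r
    by_cases hr : ∃ i, g j i = r
    · obtain ⟨i, hi⟩ := hr
      rw [Finset.sum_eq_single (i + m)]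
      · have h1 : r = g j ((i + m) - m) := by rw [add_sub_cancel_right]; exact hi.symm
        rw [hval, if_pos h1]
      · intro l _ hl
        refine hzero j m r l fun h => hl ?_
        have h2 : i = l - m := hginj j (hi.trans h)
        rw [h2, sub_add_cancel]
      · intro h; exact absurd (Finset.mem_univ _) h
    · have hψ0 : ψ j r = 0 := by
        by_contra h; exact hr (hgcov j r h)
      rw [hψ0, mul_zero]
      refine Finset.sum_eq_zero fun l _ => hzero j m r l fun h => hr ⟨l - m, h.symm⟩
  -- the Kraus family
  refine ⟨n * M, fun x => K0 (finProdFinEquiv.symm x), ?_, ?_, ?_, ?_⟩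
  · intro x
    show IncoherentPreserving (K0 (finProdFinEquiv.symm x))
    obtain ⟨j, m⟩ := finProdFinEquiv.symm x
    exact ip_of_mono _ _ (hinj j m) (hzero j m)
  · intro x
    show IncoherentPreserving (K0 (finProdFinEquiv.symm x))ᴴ
    obtain ⟨j, m⟩ := finProdFinEquiv.symm x
    exact ip_of_mono' _ _ (hinj j m) (hzero j m)
  · -- trace preservation
    have hre : ∑ x : Fin (n * M), (K0 (finProdFinEquiv.symm x))ᴴ * K0 (finProdFinEquiv.symm x)
        = ∑ y : Fin n × Fin M, (K0 y)ᴴ * K0 y :=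
      Fintype.sum_equiv finProdFinEquiv.symm _ _ fun x => rfl
    rw [hre, Fintype.sum_prod_type]
    have hKK : ∀ (j : Fin n) (m : Fin M) (l l' : Fin M),
        ((K0 (j, m))ᴴ * K0 (j, m)) l l' =
          if l = l' then ((p j : ℝ) : ℂ) * ((Complex.normSq (ψ j (g j (l - m))) : ℝ) : ℂ)
          else 0 := by
      intro j m l l'
      rw [Matrix.mul_apply]
      by_cases hll : l = l'
      · subst hll
        rw [if_pos rfl, Finset.sum_eq_single (g j (l - m))]
        · rw [Matrix.conjTranspose_apply, hval, if_pos rfl, star_mul', hsqstar j]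
          rw [show (sq j * star (ψ j (g j (l - m)))) * (sq j * ψ j (g j (l - m)))
              = sq j * sq j * (ψ j (g j (l - m)) * star (ψ j (g j (l - m)))) from by ring,
            hsqsq j, Complex.star_def, Complex.mul_conj]
        · intro r _ hrne
          rw [Matrix.conjTranspose_apply, hzero j m r l hrne, star_zero, zero_mul]
        · intro h; exact absurd (Finset.mem_univ _) h
      · rw [if_neg hll]
        refine Finset.sum_eq_zero fun r _ => ?_
        by_cases h1 : r = g j (l - m)
        · have h2 : r ≠ g j (l' - m) := by
            intro h
            exact hll (sub_left_injective (hginj j (h1.symm.trans h) : l - m = l' - m))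
          rw [hzero j m r l' h2, mul_zero]
        · rw [Matrix.conjTranspose_apply, hzero j m r l h1, star_zero, zero_mul]
    ext l l'
    rw [Matrix.sum_apply]
    simp only [Matrix.sum_apply]
    by_cases hll : l = l'
    · subst hll
      have : ∀ j : Fin n, ∑ m : Fin M, ((K0 (j, m))ᴴ * K0 (j, m)) l l
          = ((p j : ℝ) : ℂ) := by
        intro j
        have e1 : ∀ m : Fin M, ((K0 (j, m))ᴴ * K0 (j, m)) l l
            = ((p j : ℝ) : ℂ) * ((Complex.normSq (ψ j (g j (l - m))) : ℝ) : ℂ) := by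
          intro m; rw [hKK j m l l, if_pos rfl]
        rw [Finset.sum_congr rfl fun m _ => e1 m, ← Finset.mul_sum]
        have e2 : ∑ m : Fin M, ((Complex.normSq (ψ j (g j (l - m))) : ℝ) : ℂ)
            = ((∑ m : Fin M, Complex.normSq (ψ j (g j (l - m))) : ℝ) : ℂ) := by
          rw [Complex.ofReal_sum]
        have e3 : ∑ m : Fin M, Complex.normSq (ψ j (g j (l - m)))
            = ∑ i : Fin M, Complex.normSq (ψ j (g j i)) :=
          Fintype.sum_equiv (Equiv.subLeft l) _ _ fun m => rfl
        rw [e2, e3, hpsi_img j, Complex.ofReal_one, mul_one]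
      rw [Finset.sum_congr rfl fun j _ => this j, Matrix.one_apply_eq]
      rw [← Complex.ofReal_sum, hpsum, Complex.ofReal_one]
    · rw [Matrix.one_apply_ne hll]
      refine Finset.sum_eq_zero fun j _ => Finset.sum_eq_zero fun m _ => ?_
      rw [hKK j m l l', if_neg hll]
  · -- output state
    have hre : ∑ x : Fin (n * M), K0 (finProdFinEquiv.symm x) * PsiM M *
          (K0 (finProdFinEquiv.symm x))ᴴ
        = ∑ y : Fin n × Fin M, K0 y * PsiM M * (K0 y)ᴴ :=
      Fintype.sum_equiv finProdFinEquiv.symm _ _ fun x => rfl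
    rw [hre, Fintype.sum_prod_type]
    have hMC : ((M : ℕ) : ℂ) ≠ 0 := Nat.cast_ne_zero.2 (by omega)
    have htriple : ∀ (j : Fin n) (m : Fin M) (r r' : Fin d),
        (K0 (j, m) * PsiM M * (K0 (j, m))ᴴ) r r' =
          (1 / (M : ℂ)) * ((sq j * ψ j r) * star (sq j * ψ j r')) := by
      intro j m r r'
      have e1 : (K0 (j, m) * PsiM M * (K0 (j, m))ᴴ) r r'
          = ∑ l', ((1 / (M : ℂ)) * (sq j * ψ j r)) * star (K0 (j, m) r' l') := by
        rw [Matrix.mul_apply]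
        refine Finset.sum_congr rfl fun l' _ => ?_
        rw [Matrix.conjTranspose_apply]
        congr 1
        have hP : ∀ l : Fin M, PsiM M l l' = 1 / (M : ℂ) := fun l => rfl
        rw [Matrix.mul_apply]
        rw [Finset.sum_congr rfl fun l _ => by rw [hP l]]
        rw [← Finset.sum_mul, hrow j m r]
        ring
      have hst : ∑ l', star (K0 (j, m) r' l') = star (sq j * ψ j r') := by
        rw [← hrow j m r']
        exact (star_sum _ _).symm
      rw [e1, ← Finset.mul_sum, hst]
      ring
    ext r r'
    simp only [Matrix.sum_apply]
    have hR : ρ' r r' = ∑ j, ((p j : ℝ) : ℂ) * (ψ j r * star (ψ j r')) := by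
      rw [hρeq, Matrix.sum_apply]
      refine Finset.sum_congr rfl fun j _ => ?_
      rw [Matrix.smul_apply, Complex.real_smul]
      rfl
    rw [hR]
    refine Finset.sum_congr rfl fun j _ => ?_
    rw [Finset.sum_congr rfl fun m _ => htriple j m r r', Finset.sum_const,
      Finset.card_univ, Fintype.card_fin, nsmul_eq_mul]
    rw [star_mul', hsqstar j]
    rw [show sq j * ψ j r * (sq j * star (ψ j r'))
        = sq j * sq j * (ψ j r * star (ψ j r')) from by ring, hsqsq j]
    field_simp

end OneShot
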